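/- Let f ∈ ℤ_p{x} be a nonzero restricted power series such that f and f' have no common zero in ℤ_p. Then there exists N such that for all D ≥ N, Z_{f_D}(s) = Z_f(s) for all s > 0, where f_D is the truncation of f at degree D. -/

import Mathlib

open MeasureTheory Filter
namespace Stmt15A
variable {p : ℕ} [Fact p.Prime]

lemma pow_taylor {R : Type*} [CommRing R] (x y : R) (m : ℕ) :
    ∃ h : R, x ^ (m+1) - y ^ (m+1) - ((m : R) + 1) * y ^ m * (x - y) = (x - y) ^ 2 * h := by
  induction m with
  | zero => exact ⟨0, by ring⟩
  | succ m ih =>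
    obtain ⟨h, ih⟩ := ih
    refine ⟨((m : R) + 1) * y ^ m + x * h, ?_⟩
    push_cast
    linear_combination x * ih

noncomputable def Fz (b : ℕ → ℤ_[p]) (x : ℤ_[p]) : ℤ_[p] := ∑' i, b i * x ^ i
noncomputable def db (b : ℕ → ℤ_[p]) : ℕ → ℤ_[p] :=
  fun i => ((i + 1 : ℕ) : ℤ_[p]) * b (i + 1)
noncomputable def trunc (b : ℕ → ℤ_[p]) (n : ℕ) : ℕ → ℤ_[p] :=
  fun i => if i < n then b i else 0

lemma summable_aux {b : ℕ → ℤ_[p]} (hb : Tendsto b atTop (nhds 0)) (x : ℤ_[p]) :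
    Summable fun i => b i * x ^ i := by
  apply NonarchimedeanAddGroup.summable_of_tendsto_cofinite_zero
  rw [Nat.cofinite_eq_atTop]
  rw [tendsto_zero_iff_norm_tendsto_zero] at hb ⊢
  refine squeeze_zero (fun i => norm_nonneg _) (fun i => ?_) hb
  rw [norm_mul]
  exact mul_le_of_le_one_right (norm_nonneg _) (PadicInt.norm_le_one _)

lemma db_tendsto {b : ℕ → ℤ_[p]} (hb : Tendsto b atTop (nhds 0)) :
    Tendsto (db b) atTop (nhds 0) := by
  rw [tendsto_zero_iff_norm_tendsto_zero] at hb ⊢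
  refine squeeze_zero (fun i => norm_nonneg _) (fun i => ?_)
    (hb.comp (tendsto_add_atTop_nat 1))
  show ‖((i + 1 : ℕ) : ℤ_[p]) * b (i + 1)‖ ≤ _
  rw [norm_mul]
  exact mul_le_of_le_one_left (norm_nonneg _) (PadicInt.norm_le_one _)

lemma trunc_tendsto (b : ℕ → ℤ_[p]) (n : ℕ) : Tendsto (trunc b n) atTop (nhds 0) := by
  have h : (fun _ : ℕ => (0 : ℤ_[p])) =ᶠ[atTop] trunc b n := by
    filter_upwards [eventually_ge_atTop n] with i hi
    simp [trunc, Nat.not_lt.mpr hi]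
  exact Tendsto.congr' h tendsto_const_nhds

lemma lipschitz_Fz {b : ℕ → ℤ_[p]} (hb : Tendsto b atTop (nhds 0)) (x y : ℤ_[p]) :
    ‖Fz b x - Fz b y‖ ≤ ‖x - y‖ := by
  rw [Fz, Fz, ← Summable.tsum_sub (summable_aux hb x) (summable_aux hb y)]
  apply IsUltrametricDist.norm_tsum_le_of_forall_le_of_nonneg (norm_nonneg _)
  intro i
  obtain ⟨c, hc⟩ := sub_dvd_pow_sub_pow x y i
  rw [← mul_sub, hc, norm_mul, norm_mul]
  calc ‖b i‖ * (‖x - y‖ * ‖c‖) ≤ 1 * (‖x - y‖ * 1) := by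
        gcongr <;> exact PadicInt.norm_le_one _
    _ = ‖x - y‖ := by ring

lemma taylor_Fz {b : ℕ → ℤ_[p]} (hb : Tendsto b atTop (nhds 0)) (x y : ℤ_[p]) :
    ‖Fz b x - Fz b y - Fz (db b) y * (x - y)‖ ≤ ‖x - y‖ ^ 2 := by
  have h1 := summable_aux hb x
  have h2 := summable_aux hb y
  have h3 := summable_aux (db_tendsto hb) y
  have e1 : Fz b x - Fz b y = ∑' i, (b i * x ^ i - b i * y ^ i) :=
    (Summable.tsum_sub h1 h2).symm
  have hsub : Summable fun i => b i * x ^ i - b i * y ^ i := h1.sub h2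
  have e2 : (∑' i, (b i * x ^ i - b i * y ^ i))
      = ∑' i, (b (i+1) * x ^ (i+1) - b (i+1) * y ^ (i+1)) := by
    rw [Summable.tsum_eq_zero_add hsub]
    simp
  have e3 : Fz (db b) y * (x - y) = ∑' i, db b i * y ^ i * (x - y) := by
    rw [Fz]; exact (h3.tsum_mul_right _).symm
  rw [e1, e2, e3, ← Summable.tsum_sub ((summable_nat_add_iff 1).mpr hsub) (h3.mul_right _)]
  apply IsUltrametricDist.norm_tsum_le_of_forall_le_of_nonneg (by positivity)
  intro i
  obtain ⟨h, hh⟩ := pow_taylor x y i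
  have key : b (i+1) * x ^ (i+1) - b (i+1) * y ^ (i+1) - db b i * y ^ i * (x - y)
      = b (i+1) * ((x - y) ^ 2 * h) := by
    rw [← hh, db]
    push_cast
    ring
  rw [key, norm_mul, norm_mul, norm_pow]
  calc ‖b (i+1)‖ * (‖x - y‖ ^ 2 * ‖h‖) ≤ 1 * (‖x - y‖ ^ 2 * 1) := by
        gcongr <;> exact PadicInt.norm_le_one _
    _ = ‖x - y‖ ^ 2 := by ring

lemma Fz_trunc (b : ℕ → ℤ_[p]) (n : ℕ) (x : ℤ_[p]) :
    Fz (trunc b n) x = ∑ i ∈ Finset.range n, b i * x ^ i := by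
  rw [Fz, tsum_eq_sum (s := Finset.range n) ?_]
  · refine Finset.sum_congr rfl fun i hi => ?_
    rw [Finset.mem_range] at hi
    simp [trunc, hi]
  · intro i hi
    rw [Finset.mem_range] at hi
    simp [trunc, hi]

lemma db_trunc (b : ℕ → ℤ_[p]) (n : ℕ) : db (trunc b (n+1)) = trunc (db b) n := by
  funext i
  simp only [db, trunc, Nat.add_lt_add_iff_right]
  split <;> simp

lemma norm_eq_of_sub_small {u v : ℤ_[p]} (h : ‖u - v‖ < ‖v‖) : ‖u‖ = ‖v‖ := by
  have h1 : ‖u‖ ≤ ‖v‖ := by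
    have h0 := PadicInt.nonarchimedean (u - v) v
    rw [sub_add_cancel] at h0
    exact h0.trans (max_le h.le le_rfl)
  have h2 : ‖v‖ ≤ ‖u‖ := by
    have e : u + (v - u) = v := by ring
    have h3 := PadicInt.nonarchimedean u (v - u)
    rw [e] at h3
    rcases max_cases ‖u‖ ‖v - u‖ with ⟨he, _⟩ | ⟨he, _⟩
    · rwa [he] at h3
    · rw [he, norm_sub_rev] at h3
      exact absurd (lt_of_le_of_lt h3 h) (lt_irrefl _)
  exact le_antisymm h1 h2

lemma dvd_of_norm_le {x y : ℤ_[p]} (hx : x ≠ 0) (h : ‖y‖ ≤ ‖x‖) : x ∣ y := by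
  rcases eq_or_ne y 0 with rfl | hy
  · exact dvd_zero x
  have hp1 : (1 : ℝ) < p := by exact_mod_cast (Fact.out : p.Prime).one_lt
  have hval : x.valuation ≤ y.valuation := by
    rw [PadicInt.norm_eq_zpow_neg_valuation hx, PadicInt.norm_eq_zpow_neg_valuation hy] at h
    have := (zpow_le_zpow_iff_right₀ hp1).mp h
    omega
  have hmn : x.valuation ≤ y.valuation := by
    exact hval
  have d1 : x ∣ (p : ℤ_[p]) ^ x.valuation := by
    refine ⟨((PadicInt.unitCoeff hx)⁻¹ : ℤ_[p]ˣ), ?_⟩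
    have hu : ((PadicInt.unitCoeff hx : ℤ_[p])) * ((PadicInt.unitCoeff hx)⁻¹ : ℤ_[p]ˣ) = 1 := by
      exact_mod_cast (PadicInt.unitCoeff hx).mul_inv
    have spec := PadicInt.unitCoeff_spec hx
    calc (p : ℤ_[p]) ^ x.valuation
        = ((PadicInt.unitCoeff hx : ℤ_[p]) * (p : ℤ_[p]) ^ x.valuation)
            * ((PadicInt.unitCoeff hx)⁻¹ : ℤ_[p]ˣ) := by
          rw [mul_comm ((PadicInt.unitCoeff hx : ℤ_[p])) _, mul_assoc, hu, mul_one]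
      _ = x * ((PadicInt.unitCoeff hx)⁻¹ : ℤ_[p]ˣ) := by rw [← spec]
  have d2 : (p : ℤ_[p]) ^ x.valuation ∣ (p : ℤ_[p]) ^ y.valuation :=
    pow_dvd_pow _ hmn
  have d3 : (p : ℤ_[p]) ^ y.valuation ∣ y := by
    refine ⟨(PadicInt.unitCoeff hy : ℤ_[p]), ?_⟩
    conv_lhs => rw [PadicInt.unitCoeff_spec hy]
    exact mul_comm _ _
  exact d1.trans (d2.trans d3)

lemma tail_bound {b : ℕ → ℤ_[p]} (hb : Tendsto b atTop (nhds 0)) {n : ℕ} {τ : ℝ}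
    (hτ : 0 ≤ τ) (h : ∀ i, n ≤ i → ‖b i‖ ≤ τ) (x : ℤ_[p]) :
    ‖Fz b x - Fz (trunc b n) x‖ ≤ τ := by
  rw [Fz, Fz, ← Summable.tsum_sub (summable_aux hb x) (summable_aux (trunc_tendsto b n) x)]
  apply IsUltrametricDist.norm_tsum_le_of_forall_le_of_nonneg hτ
  intro i
  by_cases hi : i < n
  · simp [trunc, hi, hτ]
  · simp only [trunc, hi, if_false, zero_mul, sub_zero]
    rw [norm_mul]
    exact le_trans (mul_le_of_le_one_right (norm_nonneg _) (PadicInt.norm_le_one _))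
      (h i (Nat.le_of_not_lt hi))

lemma key_norm_eq {b : ℕ → ℤ_[p]} (hb : Tendsto b atTop (nhds 0)) {z x : ℤ_[p]}
    (hz : Fz b z = 0) (hlt : ‖x - z‖ < ‖Fz (db b) z‖) :
    ‖Fz b x‖ = ‖Fz (db b) z‖ * ‖x - z‖ := by
  rcases eq_or_ne x z with rfl | hne
  · simp [hz]
  have ht := taylor_Fz hb x z
  rw [hz, sub_zero] at ht
  have hA : ‖Fz (db b) z * (x - z)‖ = ‖Fz (db b) z‖ * ‖x - z‖ := norm_mul _ _
  have h0 : 0 < ‖x - z‖ := by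
    rw [norm_pos_iff]
    exact sub_ne_zero.mpr hne
  have hlt2 : ‖Fz b x - Fz (db b) z * (x - z)‖ < ‖Fz (db b) z * (x - z)‖ := by
    rw [hA]
    refine lt_of_le_of_lt ht ?_
    calc ‖x - z‖ ^ 2 = ‖x - z‖ * ‖x - z‖ := sq _
      _ < ‖Fz (db b) z‖ * ‖x - z‖ := mul_lt_mul_of_pos_right hlt h0
  rw [← hA]
  exact norm_eq_of_sub_small hlt2

end Stmt15A

lemma zero_ball_eq {p : ℕ} [Fact p.Prime] [MeasurableSpace ℤ_[p]] [BorelSpace ℤ_[p]]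
    (μ : MeasureTheory.Measure ℤ_[p]) [μ.IsAddHaarMeasure]
    {S : Set ℤ_[p]} (hSmeas : MeasurableSet S)
    {f g : ℤ_[p] → ℤ_[p]} {cB : ℝ} {x₀ z : ℤ_[p]} (hx₀ : x₀ ∈ S) (hz : z ∈ S)
    (hS : ∀ x, x + (z - x₀) ∈ S ↔ x ∈ S)
    (hf : ∀ x ∈ S, ‖f x‖ = cB * ‖x - x₀‖) (hg : ∀ x ∈ S, ‖g x‖ = cB * ‖x - z‖)
    (hcB : 0 ≤ cB) {s : ℝ} (hs : 0 < s) :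
    ∫ x in S, ‖g x‖ ^ s ∂μ = ∫ x in S, ‖f x‖ ^ s ∂μ := by
  have h1 : ∫ x in S, ‖g x‖ ^ s ∂μ = ∫ x in S, cB ^ s * ‖x - z‖ ^ s ∂μ :=
    setIntegral_congr_fun hSmeas (fun x hx => by
      rw [hg x hx, Real.mul_rpow hcB (norm_nonneg _)])
  have h2 : ∫ x in S, ‖f x‖ ^ s ∂μ = ∫ x in S, cB ^ s * ‖x - x₀‖ ^ s ∂μ :=
    setIntegral_congr_fun hSmeas (fun x hx => by
      rw [hf x hx, Real.mul_rpow hcB (norm_nonneg _)])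
  rw [h1, h2, integral_const_mul, integral_const_mul]
  congr 1
  rw [← integral_indicator hSmeas, ← integral_indicator hSmeas]
  rw [← integral_add_right_eq_self (μ := μ) (S.indicator fun y => ‖y - z‖ ^ s) (z - x₀)]
  congr 1
  funext x
  by_cases hx : x ∈ S
  · rw [Set.indicator_of_mem ((hS x).mpr hx), Set.indicator_of_mem hx]
    have e : x + (z - x₀) - z = x - x₀ := by ring
    rw [e]
  · rw [Set.indicator_of_notMem (fun h => hx ((hS x).mp h)), Set.indicator_of_notMem hx]

set_option maxHeartbeats 1000000 in
open Stmt15A in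
/-- If a nonzero restricted power series `f` (coefficients `a i → 0`,
`f x = ∑' i, a i * x ^ i`, derivative `f' x = ∑' i, (i+1) * a (i+1) * x ^ i`) has no
common zero with its derivative on `ℤ_p`, then the Igusa zeta functions of the
truncations `f_D` eventually all agree with that of `f`. -/
theorem stmt_15 (p : ℕ) [Fact p.Prime]
    [MeasurableSpace ℤ_[p]] [BorelSpace ℤ_[p]]
    (μ : Measure ℤ_[p]) [μ.IsAddHaarMeasure] (hμ : μ Set.univ = 1)
    (a : ℕ → ℤ_[p]) (ha : Tendsto a atTop (nhds 0))
    (hfne : ∃ i, a i ≠ 0)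
    (hnd : ∀ x : ℤ_[p], ¬ ((∑' i : ℕ, a i * x ^ i) = 0 ∧
      (∑' i : ℕ, ((i + 1 : ℕ) : ℤ_[p]) * a (i + 1) * x ^ i) = 0)) :
    ∃ N : ℕ, ∀ D : ℕ, N ≤ D → ∀ s : ℝ, 0 < s →
      (∫ x : ℤ_[p], ‖∑ i ∈ Finset.range (D + 1), a i * x ^ i‖ ^ s ∂μ)
        = ∫ x : ℤ_[p], ‖∑' i : ℕ, a i * x ^ i‖ ^ s ∂μ := by
  classical
  have hp1 : (1 : ℝ) < p := by exact_mod_cast (Fact.out : p.Prime).one_lt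
  -- continuity of restricted power series
  have hlipf : ∀ b : ℕ → ℤ_[p], Tendsto b atTop (nhds 0) → Continuous (Fz b) := by
    intro b hb
    refine (LipschitzWith.of_dist_le_mul (K := 1) fun x y => ?_).continuous
    rw [dist_eq_norm, NNReal.coe_one, one_mul]
    exact lipschitz_Fz hb x y
  have hfc : Continuous (Fz a) := hlipf a ha
  have hfdc : Continuous (Fz (db a)) := hlipf _ (db_tendsto ha)
  -- uniform positivity of max of norms
  obtain ⟨w, -, hw⟩ := isCompact_univ.exists_isMinOn Set.univ_nonempty
    ((hfc.norm.max hfdc.norm).continuousOn)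
  set ε : ℝ := min (max ‖Fz a w‖ ‖Fz (db a) w‖) 1 with hε_def
  have hεpos : 0 < ε := by
    refine lt_min ?_ one_pos
    rcases not_and_or.mp (hnd w) with h | h
    · exact lt_of_lt_of_le (norm_pos_iff.mpr h) (le_max_left _ _)
    · exact lt_of_lt_of_le (norm_pos_iff.mpr h) (le_max_right _ _)
  have hε1 : ε ≤ 1 := min_le_right _ _
  have hεle : ∀ x, ε ≤ max ‖Fz a x‖ ‖Fz (db a) x‖ := fun x =>
    le_trans (min_le_left _ _) (hw (Set.mem_univ x))
  -- small radius
  obtain ⟨n, hn⟩ := PadicInt.exists_pow_neg_lt p hεpos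
  set r : ℝ := (p : ℝ) ^ (-(n : ℤ)) with hr_def
  have hrpos : 0 < r := by positivity
  have hrε : r < ε := hn
  -- balls
  set B : ℕ → Set ℤ_[p] := fun c => {x | ‖x - (c : ℤ_[p])‖ ≤ r} with hB_def
  have hBclosed : ∀ c, IsClosed (B c) := fun c =>
    isClosed_le ((continuous_id.sub continuous_const).norm) continuous_const
  have hBmeas : ∀ c, MeasurableSet (B c) := fun c => (hBclosed c).measurableSet
  have hBcompact : ∀ c, IsCompact (B c) := fun c => (hBclosed c).isCompact
  have hBnonempty : ∀ c : ℕ, ((c : ℤ_[p]) ∈ B c) := fun c => by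
    show ‖(c : ℤ_[p]) - (c : ℤ_[p])‖ ≤ r
    simp [hrpos.le]
  have hBdist : ∀ c : ℕ, ∀ x ∈ B c, ∀ y ∈ B c, ‖x - y‖ ≤ r := by
    intro c x hx y hy
    have e : x - y = (x - (c : ℤ_[p])) + -(y - (c : ℤ_[p])) := by ring
    rw [e]
    refine le_trans (PadicInt.nonarchimedean _ _) (max_le hx ?_)
    rw [norm_neg]; exact hy
  have hcover : ∀ x : ℤ_[p], x ∈ B (x.appr n) := fun x =>
    (PadicInt.norm_le_pow_iff_mem_span_pow _ n).mpr (PadicInt.appr_spec n x)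
  have hdisj : (↑(Finset.range (p ^ n)) : Set ℕ).Pairwise (Function.onFun Disjoint B) := by
    intro c hc c' hc' hne
    rw [Finset.mem_coe, Finset.mem_range] at hc hc'
    rw [Function.onFun, Set.disjoint_left]
    intro x hxc hxc'
    apply hne
    have hd : ‖((c : ℤ_[p]) - (c' : ℤ_[p]))‖ ≤ r := by
      have e : (c : ℤ_[p]) - (c' : ℤ_[p]) = -(x - c) + (x - c') := by ring
      rw [e]
      refine le_trans (PadicInt.nonarchimedean _ _) (max_le ?_ hxc')
      rw [norm_neg]; exact hxc
    have hdvd : ((p : ℤ) ^ n) ∣ ((c : ℤ) - (c' : ℤ)) := by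
      rw [← PadicInt.norm_int_le_pow_iff_dvd]
      push_cast
      exact hd
    have h0 : ((c : ℤ) - (c' : ℤ)) = 0 := by
      refine Int.eq_zero_of_abs_lt_dvd hdvd ?_
      have hcz : (c : ℤ) < (p : ℤ) ^ n := by exact_mod_cast hc
      have hcz' : (c' : ℤ) < (p : ℤ) ^ n := by exact_mod_cast hc'
      have hc0 : (0 : ℤ) ≤ (c : ℤ) := Int.natCast_nonneg c
      have hc0' : (0 : ℤ) ≤ (c' : ℤ) := Int.natCast_nonneg c'
      rw [abs_sub_lt_iff]
      constructor <;> linarith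
    exact_mod_cast sub_eq_zero.mp h0
  -- lower bounds on zero-free balls
  have hδex : ∀ c : ℕ, ∃ d : ℝ, 0 < d ∧
      ((¬ ∃ x ∈ B c, Fz a x = 0) → ∀ x ∈ B c, d ≤ ‖Fz a x‖) := by
    intro c
    by_cases hz : ∃ x ∈ B c, Fz a x = 0
    · exact ⟨1, one_pos, fun h => absurd hz h⟩
    · obtain ⟨z, hzB, hzmin⟩ := (hBcompact c).exists_isMinOn ⟨_, hBnonempty c⟩
        hfc.norm.continuousOn
      exact ⟨‖Fz a z‖, norm_pos_iff.mpr fun h0 => hz ⟨z, hzB, h0⟩, fun _ x hx => hzmin hx⟩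
  choose δ hδpos hδ using hδex
  have hrange_ne : (Finset.range (p ^ n)).Nonempty :=
    ⟨0, Finset.mem_range.mpr (pow_pos (Fact.out : p.Prime).pos n)⟩
  set m0 : ℝ := min (min (ε ^ 2) (ε * r)) ((Finset.range (p ^ n)).inf' hrange_ne δ) with hm0_def
  have hm0pos : 0 < m0 := by
    refine lt_min (lt_min (by positivity) (by positivity)) ?_
    rw [Finset.lt_inf'_iff]
    exact fun c _ => hδpos c
  set τ : ℝ := m0 / 2 with hτ_def
  have hτpos : 0 < τ := by positivity
  have hτlt : τ < m0 := half_lt_self hm0pos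
  have hτε2 : τ < ε ^ 2 := lt_of_lt_of_le hτlt (le_trans (min_le_left _ _) (min_le_left _ _))
  have hτεr : τ < ε * r := lt_of_lt_of_le hτlt (le_trans (min_le_left _ _) (min_le_right _ _))
  have hτδ : ∀ c ∈ Finset.range (p ^ n), τ < δ c := fun c hc =>
    lt_of_lt_of_le hτlt (le_trans (min_le_right _ _) (Finset.inf'_le δ hc))
  have hτε : τ < ε := lt_of_lt_of_le hτε2 (by nlinarith [hεpos, hε1])
  -- choose N
  obtain ⟨N, hN⟩ := Metric.tendsto_atTop.mp ha τ hτpos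
  refine ⟨N, fun D hD s hs => ?_⟩
  have hNa : ∀ i, N ≤ i → ‖a i‖ ≤ τ := fun i hi => by
    have h' := hN i hi
    rw [dist_zero_right] at h'
    exact h'.le
  -- rewrite the goal in terms of Fz
  have hrw1 : ∀ x : ℤ_[p], (∑ i ∈ Finset.range (D + 1), a i * x ^ i)
      = Fz (trunc a (D + 1)) x := fun x => (Fz_trunc a (D + 1) x).symm
  have hrw2 : ∀ x : ℤ_[p], (∑' i : ℕ, a i * x ^ i) = Fz a x := fun _ => rfl
  simp only [hrw1, hrw2]
  -- truncation facts
  have htrt : Tendsto (trunc a (D + 1)) atTop (nhds 0) := trunc_tendsto a (D + 1)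
  have hgc : Continuous (Fz (trunc a (D + 1))) := hlipf _ htrt
  have htailf : ∀ x, ‖Fz a x - Fz (trunc a (D + 1)) x‖ ≤ τ := fun x =>
    tail_bound ha hτpos.le (fun i hi => hNa i (by omega)) x
  have htaild : ∀ x, ‖Fz (db a) x - Fz (db (trunc a (D + 1))) x‖ ≤ τ := by
    intro x
    rw [db_trunc]
    refine tail_bound (db_tendsto ha) hτpos.le (fun i hi => ?_) x
    show ‖((i + 1 : ℕ) : ℤ_[p]) * a (i + 1)‖ ≤ τ
    rw [norm_mul]
    exact le_trans (mul_le_of_le_one_left (norm_nonneg _) (PadicInt.norm_le_one _))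
      (hNa (i + 1) (by omega))
  -- integrands
  have hFgcont : Continuous fun x : ℤ_[p] => ‖Fz (trunc a (D + 1)) x‖ ^ s :=
    hgc.norm.rpow_const fun x => Or.inr hs.le
  have hFfcont : Continuous fun x : ℤ_[p] => ‖Fz a x‖ ^ s :=
    hfc.norm.rpow_const fun x => Or.inr hs.le
  -- decomposition of integrals over the balls
  have hdecomp : ∀ F : ℤ_[p] → ℝ, Continuous F →
      ∫ x, F x ∂μ = ∑ c ∈ Finset.range (p ^ n), ∫ x in B c, F x ∂μ := by
    intro F hF
    have hint : Integrable F μ :=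
      hF.integrable_of_hasCompactSupport ((isClosed_tsupport F).isCompact)
    have huniv : (⋃ c ∈ Finset.range (p ^ n), B c) = Set.univ := by
      refine Set.eq_univ_of_forall fun x => ?_
      exact Set.mem_biUnion (Finset.mem_range.mpr (PadicInt.appr_lt x n)) (hcover x)
    rw [← setIntegral_univ, ← huniv,
      integral_biUnion_finset _ (fun c _ => hBmeas c) hdisj (fun c _ => hint.integrableOn)]
  rw [hdecomp _ hFgcont, hdecomp _ hFfcont]
  refine Finset.sum_congr rfl fun c hc => ?_
  -- per-ball analysis
  by_cases hz : ∃ x ∈ B c, Fz a x = 0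
  · -- ball containing a (necessarily simple) zero of f
    obtain ⟨x₀, hx₀B, hfx₀⟩ := hz
    set cB : ℝ := ‖Fz (db a) x₀‖ with hcB_def
    have hcBε : ε ≤ cB := by
      have h' := hεle x₀
      rwa [hfx₀, norm_zero, max_eq_right (norm_nonneg _)] at h'
    have hcBpos : 0 < cB := lt_of_lt_of_le hεpos hcBε
    have hfnorm : ∀ x ∈ B c, ‖Fz a x‖ = cB * ‖x - x₀‖ := fun x hx =>
      key_norm_eq ha hfx₀
        (lt_of_le_of_lt (hBdist c x hx x₀ hx₀B) (lt_of_lt_of_le hrε hcBε))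
    have hgdnorm : ∀ w ∈ B c, ‖Fz (db (trunc a (D + 1))) w‖ = cB := by
      intro w hw'
      apply norm_eq_of_sub_small
      have e : Fz (db (trunc a (D + 1))) w - Fz (db a) x₀
          = (Fz (db (trunc a (D + 1))) w - Fz (db a) w) + (Fz (db a) w - Fz (db a) x₀) := by
        ring
      rw [e]
      refine lt_of_le_of_lt (PadicInt.nonarchimedean _ _) (max_lt ?_ ?_)
      · rw [norm_sub_rev]
        exact lt_of_le_of_lt (htaild w) (lt_of_lt_of_le hτε hcBε)
      · exact lt_of_le_of_lt
          (le_trans (lipschitz_Fz (db_tendsto ha) w x₀) (hBdist c w hw' x₀ hx₀B))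
          (lt_of_lt_of_le hrε hcBε)
    obtain ⟨z, hzB, hzmin⟩ := (hBcompact c).exists_isMinOn ⟨_, hBnonempty c⟩
      hgc.norm.continuousOn
    have hgx₀ : ‖Fz (trunc a (D + 1)) x₀‖ ≤ τ := by
      have h' := htailf x₀
      rwa [hfx₀, zero_sub, norm_neg] at h'
    have hgz_le : ‖Fz (trunc a (D + 1)) z‖ ≤ τ := le_trans (hzmin hx₀B) hgx₀
    have hgz0 : Fz (trunc a (D + 1)) z = 0 := by
      by_contra hne
      have hgzpos : 0 < ‖Fz (trunc a (D + 1)) z‖ := norm_pos_iff.mpr hne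
      have hgdz : ‖Fz (db (trunc a (D + 1))) z‖ = cB := hgdnorm z hzB
      have hgdz0 : Fz (db (trunc a (D + 1))) z ≠ 0 := by
        intro h0
        rw [h0, norm_zero] at hgdz
        exact hcBpos.ne' hgdz.symm
      obtain ⟨y, hy⟩ := dvd_of_norm_le (y := Fz (trunc a (D + 1)) z) hgdz0 (by
        rw [hgdz]
        exact le_trans hgz_le (le_of_lt (lt_of_lt_of_le hτε hcBε)))
      have hynorm : cB * ‖y‖ = ‖Fz (trunc a (D + 1)) z‖ := by
        rw [hy, norm_mul, hgdz]
      have hyr : ‖y‖ < r := by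
        nlinarith [hgz_le, hτεr, hcBε, hεpos, norm_nonneg y, hrpos, hcBpos,
          mul_le_mul_of_nonneg_right hcBε hrpos.le]
      have hz'B : z - y ∈ B c := by
        show ‖z - y - (c : ℤ_[p])‖ ≤ r
        have e : z - y - (c : ℤ_[p]) = (z - (c : ℤ_[p])) + -y := by ring
        rw [e]
        refine le_trans (PadicInt.nonarchimedean _ _) (max_le hzB ?_)
        rw [norm_neg]; exact hyr.le
      have htay := taylor_Fz htrt (z - y) z
      have he : Fz (trunc a (D + 1)) (z - y) - Fz (trunc a (D + 1)) z
          - Fz (db (trunc a (D + 1))) z * (z - y - z) = Fz (trunc a (D + 1)) (z - y) := by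
        linear_combination - hy
      have hz'z : z - y - z = -y := by ring
      rw [he] at htay
      rw [hz'z, norm_neg] at htay
      have hεcB2 : ε ^ 2 ≤ cB ^ 2 := pow_le_pow_left₀ hεpos.le hcBε 2
      have hlt : ‖Fz (trunc a (D + 1)) z‖ < cB ^ 2 :=
        lt_of_le_of_lt hgz_le (lt_of_lt_of_le hτε2 hεcB2)
      have hsq : cB ^ 2 * ‖y‖ ^ 2 = ‖Fz (trunc a (D + 1)) z‖ ^ 2 := by
        rw [← hynorm]; ring
      have hfin : ‖y‖ ^ 2 < ‖Fz (trunc a (D + 1)) z‖ := by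
        nlinarith [hsq, hlt, hgzpos, hcBpos, norm_nonneg y]
      exact absurd (hzmin hz'B) (not_le.mpr (lt_of_le_of_lt htay hfin))
    have hgnorm : ∀ x ∈ B c, ‖Fz (trunc a (D + 1)) x‖ = cB * ‖x - z‖ := by
      intro x hx
      have h1 := key_norm_eq htrt hgz0 (x := x) (by
        rw [hgdnorm z hzB]
        exact lt_of_le_of_lt (hBdist c x hx z hzB) (lt_of_lt_of_le hrε hcBε))
      rw [h1, hgdnorm z hzB]
    have hSprop : ∀ x, x + (z - x₀) ∈ B c ↔ x ∈ B c := by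
      have htr : ‖z - x₀‖ ≤ r := hBdist c z hzB x₀ hx₀B
      intro x
      constructor
      · intro hx
        show ‖x - (c : ℤ_[p])‖ ≤ r
        have e : x - (c : ℤ_[p]) = (x + (z - x₀) - (c : ℤ_[p])) + -(z - x₀) := by ring
        rw [e]
        refine le_trans (PadicInt.nonarchimedean _ _) (max_le hx ?_)
        rw [norm_neg]; exact htr
      · intro hx
        show ‖x + (z - x₀) - (c : ℤ_[p])‖ ≤ r
        have e : x + (z - x₀) - (c : ℤ_[p]) = (x - (c : ℤ_[p])) + (z - x₀) := by ring
        rw [e]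
        exact le_trans (PadicInt.nonarchimedean _ _) (max_le hx htr)
    exact zero_ball_eq μ (hBmeas c) hx₀B hzB hSprop hfnorm hgnorm hcBpos.le hs
  · -- zero-free ball : the two integrands agree pointwise
    refine setIntegral_congr_fun (hBmeas c) fun x hx => ?_
    have hfl : τ < ‖Fz a x‖ := lt_of_lt_of_le (hτδ c hc) (hδ c hz x hx)
    have hsmall : ‖Fz (trunc a (D + 1)) x - Fz a x‖ < ‖Fz a x‖ :=
      lt_of_le_of_lt (by rw [norm_sub_rev]; exact htailf x) hfl
    rw [norm_eq_of_sub_small hsmall]
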